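/- Let 𝒞 be a category, let 𝒫 be a poset, and let U, V ⊆ 𝒫 be full subposets with U ∪ V = 𝒫 satisfying: (a) for every u ∈ U and v ∈ V with u ≤ v, the subposet U ∩ V ∩ [u,v] is connected; and (b) for every v ∈ V and u ∈ U with v ≤ u, the subposet U ∩ V ∩ [v,u] is connected. Then, for every pair of functors M : U → 𝒞 and N : V → 𝒞 with M|_{U∩V} = N|_{U∩V}, there exists a unique functor L : 𝒫 → 𝒞 such that L|_U = M and L|_V = N. -/

import Mathlib

open CategoryTheory

section PosetFunctors

variable {P : Type} [PartialOrder P] {C : Type*} [Category C]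

/-- The inclusion functor of a full subposet into the ambient poset. -/
def posetIncl (S : Set P) : ↥S ⥤ P :=
  Monotone.functor (f := (Subtype.val : ↥S → P)) (fun _ _ h => h)

/-- The restriction of a functor defined on a poset to a full subposet. -/
def restrF (F : P ⥤ C) (S : Set P) : ↥S ⥤ C := posetIncl S ⋙ F

/-- The restriction, to a smaller full subposet, of a functor defined on a full subposet. -/
def restrSubF {S T : Set P} (h : S ⊆ T) (F : ↥T ⥤ C) : ↥S ⥤ C :=
  Monotone.functor (f := Set.inclusion h) (fun _ _ hle => hle) ⋙ F

/-- A subset of a poset is connected (as a poset) if it is nonempty and any two of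
its elements are joined by a finite zigzag of comparable elements inside the subset. -/
def ConnectedSubposet (S : Set P) : Prop :=
  S.Nonempty ∧ ∀ x ∈ S, ∀ y ∈ S, ∃ (m : ℕ) (p : ℕ → P),
    p 0 = x ∧ p m = y ∧ (∀ i ≤ m, p i ∈ S) ∧
    ∀ i < m, p i ≤ p (i + 1) ∨ p (i + 1) ≤ p i

end PosetFunctors

set_option linter.unusedSectionVars false

section GlueAux

variable {P : Type} [PartialOrder P] {C : Type*} [Category C]

lemma connected_const {S : Set P} (hS : ConnectedSubposet S) {α : Sort*}
    (f : ∀ p, p ∈ S → α)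
    (hf : ∀ p hp q hq, p ≤ q → f p hp = f q hq)
    {p : P} (hp : p ∈ S) {q : P} (hq : q ∈ S) : f p hp = f q hq := by
  obtain ⟨m, c, hc0, hcm, hcS, hcz⟩ := hS.2 p hp q hq
  have key : ∀ i (h : i ≤ m), f p hp = f (c i) (hcS i h) := by
    intro i
    induction i with
    | zero =>
      intro h
      subst hc0
      rfl
    | succ i ih =>
      intro h
      have hi := ih (Nat.le_of_succ_le h)
      rcases hcz i h with hle | hle
      · exact hi.trans (hf _ _ _ _ hle)
      · exact hi.trans (hf _ _ _ _ hle).symm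
  have := key m le_rfl
  subst hcm
  exact this

lemma eqToHom_square {a b c d : C} (e₁ : a = b) (e₂ : c = d) (f : a ⟶ c) (g : b ⟶ d)
    (h : f ≫ eqToHom e₂ = eqToHom e₁ ≫ g) : eqToHom e₁.symm ≫ f = g ≫ eqToHom e₂.symm := by
  subst e₁; subst e₂; simpa using h

variable (U V : Set P) (M : ↥U ⥤ C) (N : ↥V ⥤ C)

lemma memV (hUV : U ∪ V = Set.univ) {p : P} (hp : p ∉ U) : p ∈ V := by
  have : p ∈ U ∪ V := hUV ▸ Set.mem_univ p
  rcases this with h | h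
  · exact absurd h hp
  · exact h

variable (hMN : restrSubF Set.inter_subset_left M = restrSubF Set.inter_subset_right N)

include hMN

lemma Eobj {p : P} (hU : p ∈ U) (hV : p ∈ V) :
    M.obj ⟨p, hU⟩ = N.obj ⟨p, hV⟩ :=
  Functor.congr_obj hMN ⟨p, hU, hV⟩

lemma Enat {p q : P} (hU₁ : p ∈ U) (hV₁ : p ∈ V) (hU₂ : q ∈ U) (hV₂ : q ∈ V) (h : p ≤ q) :
    M.map (homOfLE h : (⟨p, hU₁⟩ : ↥U) ⟶ ⟨q, hU₂⟩) ≫ eqToHom (Eobj U V M N hMN hU₂ hV₂) =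
      eqToHom (Eobj U V M N hMN hU₁ hV₁) ≫
        N.map (homOfLE h : (⟨p, hV₁⟩ : ↥V) ⟶ ⟨q, hV₂⟩) := by
  have := Functor.congr_hom hMN
    (X := ⟨p, hU₁, hV₁⟩) (Y := ⟨q, hU₂, hV₂⟩) (homOfLE h)
  simp only [restrSubF, Functor.comp_map, Monotone.functor] at this
  rw [this]
  simp [Eobj]
  erw [eqToHom_trans, eqToHom_refl, Category.comp_id]

/-- Upward bridge map through a point of `U ∩ V`. -/
def bU {p q : P} (hp : p ∈ U) (hq : q ∈ V) {w : P} (hw : w ∈ U ∩ V ∩ Set.Icc p q) :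
    M.obj ⟨p, hp⟩ ⟶ N.obj ⟨q, hq⟩ :=
  M.map (homOfLE hw.2.1 : (⟨p, hp⟩ : ↥U) ⟶ ⟨w, hw.1.1⟩) ≫
    eqToHom (Eobj U V M N hMN hw.1.1 hw.1.2) ≫
      N.map (homOfLE hw.2.2 : (⟨w, hw.1.2⟩ : ↥V) ⟶ ⟨q, hq⟩)

/-- Downward bridge map through a point of `U ∩ V`. -/
def bD {p q : P} (hp : p ∈ V) (hq : q ∈ U) {w : P} (hw : w ∈ U ∩ V ∩ Set.Icc p q) :
    N.obj ⟨p, hp⟩ ⟶ M.obj ⟨q, hq⟩ :=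
  N.map (homOfLE hw.2.1 : (⟨p, hp⟩ : ↥V) ⟶ ⟨w, hw.1.2⟩) ≫
    eqToHom (Eobj U V M N hMN hw.1.1 hw.1.2).symm ≫
      M.map (homOfLE hw.2.2 : (⟨w, hw.1.1⟩ : ↥U) ⟶ ⟨q, hq⟩)

lemma bU_step {p q : P} (hp : p ∈ U) (hq : q ∈ V) {w₁ w₂ : P}
    (hw₁ : w₁ ∈ U ∩ V ∩ Set.Icc p q) (hw₂ : w₂ ∈ U ∩ V ∩ Set.Icc p q) (h : w₁ ≤ w₂) :
    bU U V M N hMN hp hq hw₁ = bU U V M N hMN hp hq hw₂ := by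
  unfold bU
  have hN : (homOfLE hw₁.2.2 : (⟨w₁, hw₁.1.2⟩ : ↥V) ⟶ ⟨q, hq⟩) =
      (homOfLE h : (⟨w₁, hw₁.1.2⟩ : ↥V) ⟶ ⟨w₂, hw₂.1.2⟩) ≫ homOfLE hw₂.2.2 := rfl
  have hM : (homOfLE hw₂.2.1 : (⟨p, hp⟩ : ↥U) ⟶ ⟨w₂, hw₂.1.1⟩) =
      (homOfLE hw₁.2.1 : (⟨p, hp⟩ : ↥U) ⟶ ⟨w₁, hw₁.1.1⟩) ≫ homOfLE h := rfl
  rw [hN, hM, N.map_comp, M.map_comp]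
  have := Enat U V M N hMN hw₁.1.1 hw₁.1.2 hw₂.1.1 hw₂.1.2 h
  simp only [Category.assoc]
  rw [← Category.assoc (eqToHom _), ← this]
  simp

lemma bU_indep {p q : P} (hp : p ∈ U) (hq : q ∈ V)
    (hconn : ConnectedSubposet (U ∩ V ∩ Set.Icc p q)) {w₁ w₂ : P}
    (hw₁ : w₁ ∈ U ∩ V ∩ Set.Icc p q) (hw₂ : w₂ ∈ U ∩ V ∩ Set.Icc p q) :
    bU U V M N hMN hp hq hw₁ = bU U V M N hMN hp hq hw₂ :=
  connected_const hconn (fun _ hw => bU U V M N hMN hp hq hw)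
    (fun _ ha _ hb h => bU_step U V M N hMN hp hq ha hb h) hw₁ hw₂

lemma bD_step {p q : P} (hp : p ∈ V) (hq : q ∈ U) {w₁ w₂ : P}
    (hw₁ : w₁ ∈ U ∩ V ∩ Set.Icc p q) (hw₂ : w₂ ∈ U ∩ V ∩ Set.Icc p q) (h : w₁ ≤ w₂) :
    bD U V M N hMN hp hq hw₁ = bD U V M N hMN hp hq hw₂ := by
  unfold bD
  have hM : (homOfLE hw₁.2.2 : (⟨w₁, hw₁.1.1⟩ : ↥U) ⟶ ⟨q, hq⟩) =
      (homOfLE h : (⟨w₁, hw₁.1.1⟩ : ↥U) ⟶ ⟨w₂, hw₂.1.1⟩) ≫ homOfLE hw₂.2.2 := rfl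
  have hN : (homOfLE hw₂.2.1 : (⟨p, hp⟩ : ↥V) ⟶ ⟨w₂, hw₂.1.2⟩) =
      (homOfLE hw₁.2.1 : (⟨p, hp⟩ : ↥V) ⟶ ⟨w₁, hw₁.1.2⟩) ≫ homOfLE h := rfl
  rw [hM, hN, N.map_comp, M.map_comp]
  have := Enat U V M N hMN hw₁.1.1 hw₁.1.2 hw₂.1.1 hw₂.1.2 h
  simp only [Category.assoc]
  congr 1
  rw [← Category.assoc, ← Category.assoc]
  congr 1
  exact eqToHom_square _ _ _ _ this

lemma bD_indep {p q : P} (hp : p ∈ V) (hq : q ∈ U)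
    (hconn : ConnectedSubposet (U ∩ V ∩ Set.Icc p q)) {w₁ w₂ : P}
    (hw₁ : w₁ ∈ U ∩ V ∩ Set.Icc p q) (hw₂ : w₂ ∈ U ∩ V ∩ Set.Icc p q) :
    bD U V M N hMN hp hq hw₁ = bD U V M N hMN hp hq hw₂ :=
  connected_const hconn (fun _ hw => bD U V M N hMN hp hq hw)
    (fun _ ha _ hb h => bD_step U V M N hMN hp hq ha hb h) hw₁ hw₂

lemma bU_preM {p q r : P} (hp : p ∈ U) (hq : q ∈ U) (hr : r ∈ V) (h : p ≤ q) {w : P}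
    (hw : w ∈ U ∩ V ∩ Set.Icc q r) :
    M.map (homOfLE h : (⟨p, hp⟩ : ↥U) ⟶ ⟨q, hq⟩) ≫ bU U V M N hMN hq hr hw =
      bU U V M N hMN hp hr ⟨hw.1, h.trans hw.2.1, hw.2.2⟩ := by
  unfold bU
  rw [← Category.assoc, ← M.map_comp]
  rfl

lemma bU_postN {p q r : P} (hp : p ∈ U) (hq : q ∈ V) (hr : r ∈ V) (h : q ≤ r) {w : P}
    (hw : w ∈ U ∩ V ∩ Set.Icc p q) :
    bU U V M N hMN hp hq hw ≫ N.map (homOfLE h : (⟨q, hq⟩ : ↥V) ⟶ ⟨r, hr⟩) =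
      bU U V M N hMN hp hr ⟨hw.1, hw.2.1, hw.2.2.trans h⟩ := by
  unfold bU
  simp only [Category.assoc, ← N.map_comp]
  rfl

lemma bD_preN {p q r : P} (hp : p ∈ V) (hq : q ∈ V) (hr : r ∈ U) (h : p ≤ q) {w : P}
    (hw : w ∈ U ∩ V ∩ Set.Icc q r) :
    N.map (homOfLE h : (⟨p, hp⟩ : ↥V) ⟶ ⟨q, hq⟩) ≫ bD U V M N hMN hq hr hw =
      bD U V M N hMN hp hr ⟨hw.1, h.trans hw.2.1, hw.2.2⟩ := by
  unfold bD
  rw [← Category.assoc, ← N.map_comp]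
  rfl

lemma bD_postM {p q r : P} (hp : p ∈ V) (hq : q ∈ U) (hr : r ∈ U) (h : q ≤ r) {w : P}
    (hw : w ∈ U ∩ V ∩ Set.Icc p q) :
    bD U V M N hMN hp hq hw ≫ M.map (homOfLE h : (⟨q, hq⟩ : ↥U) ⟶ ⟨r, hr⟩) =
      bD U V M N hMN hp hr ⟨hw.1, hw.2.1, hw.2.2.trans h⟩ := by
  unfold bD
  simp only [Category.assoc, ← M.map_comp]
  rfl

lemma bU_bD {p q r : P} (hp : p ∈ U) (hq : q ∈ V) (hr : r ∈ U) {w w' : P}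
    (hw : w ∈ U ∩ V ∩ Set.Icc p q) (hw' : w' ∈ U ∩ V ∩ Set.Icc q r) :
    bU U V M N hMN hp hq hw ≫ bD U V M N hMN hq hr hw' =
      M.map (homOfLE (hw.2.1.trans ((hw.2.2.trans hw'.2.1).trans hw'.2.2)) :
        (⟨p, hp⟩ : ↥U) ⟶ ⟨r, hr⟩) := by
  unfold bU bD
  have hww' : w ≤ w' := hw.2.2.trans hw'.2.1
  have hNN : (homOfLE hw.2.2 : (⟨w, hw.1.2⟩ : ↥V) ⟶ ⟨q, hq⟩) ≫ homOfLE hw'.2.1 =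
      (homOfLE hww' : (⟨w, hw.1.2⟩ : ↥V) ⟶ ⟨w', hw'.1.2⟩) := rfl
  simp only [Category.assoc]
  rw [← Category.assoc (N.map _) (N.map _), ← N.map_comp, hNN]
  have hEnat := Enat U V M N hMN hw.1.1 hw.1.2 hw'.1.1 hw'.1.2 hww'
  rw [← Category.assoc (eqToHom _) (N.map _), ← hEnat]
  simp only [Category.assoc, eqToHom_trans, eqToHom_refl, Category.id_comp,
    ← Functor.map_comp]
  simp [← Functor.map_comp]

lemma bD_bU {p q r : P} (hp : p ∈ V) (hq : q ∈ U) (hr : r ∈ V) {w w' : P}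
    (hw : w ∈ U ∩ V ∩ Set.Icc p q) (hw' : w' ∈ U ∩ V ∩ Set.Icc q r) :
    bD U V M N hMN hp hq hw ≫ bU U V M N hMN hq hr hw' =
      N.map (homOfLE (hw.2.1.trans ((hw.2.2.trans hw'.2.1).trans hw'.2.2)) :
        (⟨p, hp⟩ : ↥V) ⟶ ⟨r, hr⟩) := by
  unfold bU bD
  have hww' : w ≤ w' := hw.2.2.trans hw'.2.1
  have hMM : (homOfLE hw.2.2 : (⟨w, hw.1.1⟩ : ↥U) ⟶ ⟨q, hq⟩) ≫ homOfLE hw'.2.1 =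
      (homOfLE hww' : (⟨w, hw.1.1⟩ : ↥U) ⟶ ⟨w', hw'.1.1⟩) := rfl
  simp only [Category.assoc]
  rw [← Category.assoc (M.map _) (M.map _), ← M.map_comp, hMM]
  have hEnat := Enat U V M N hMN hw.1.1 hw.1.2 hw'.1.1 hw'.1.2 hww'
  rw [← Category.assoc (M.map _) (eqToHom _), hEnat]
  simp only [Category.assoc, eqToHom_trans, eqToHom_refl, Category.id_comp,
    ← Functor.map_comp]
  simp [← Functor.map_comp]

variable (hUV : U ∪ V = Set.univ)
variable (h₁ : ∀ u ∈ U, ∀ v ∈ V, u ≤ v → ConnectedSubposet (U ∩ V ∩ Set.Icc u v))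
variable (h₂ : ∀ v ∈ V, ∀ u ∈ U, v ≤ u → ConnectedSubposet (U ∩ V ∩ Set.Icc v u))

omit hMN in
open Classical in
/-- The object part of the glued functor. -/
noncomputable def Lobj (hUV : U ∪ V = Set.univ) (p : P) : C :=
  if hp : p ∈ U then M.obj ⟨p, hp⟩ else N.obj ⟨p, memV U V hUV hp⟩

omit hMN in
lemma eU {p : P} (hp : p ∈ U) : Lobj U V M N hUV p = M.obj ⟨p, hp⟩ := dif_pos hp

omit hMN in
lemma eV {p : P} (hp : p ∉ U) : Lobj U V M N hUV p = N.obj ⟨p, memV U V hUV hp⟩ :=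
  dif_neg hp

open Classical in
/-- The morphism part of the glued functor. -/
noncomputable def phi
    (h₁ : ∀ u ∈ U, ∀ v ∈ V, u ≤ v → ConnectedSubposet (U ∩ V ∩ Set.Icc u v))
    (h₂ : ∀ v ∈ V, ∀ u ∈ U, v ≤ u → ConnectedSubposet (U ∩ V ∩ Set.Icc v u))
    {p q : P} (hpq : p ≤ q) : Lobj U V M N hUV p ⟶ Lobj U V M N hUV q :=
  if hp : p ∈ U then
    if hq : q ∈ U then
      eqToHom (eU U V M N hUV hp) ≫ M.map (homOfLE hpq : (⟨p, hp⟩ : ↥U) ⟶ ⟨q, hq⟩) ≫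
        eqToHom (eU U V M N hUV hq).symm
    else
      eqToHom (eU U V M N hUV hp) ≫
        bU U V M N hMN hp (memV U V hUV hq)
          (h₁ p hp q (memV U V hUV hq) hpq).1.choose_spec ≫
        eqToHom (eV U V M N hUV hq).symm
  else
    if hq : q ∈ U then
      eqToHom (eV U V M N hUV hp) ≫
        bD U V M N hMN (memV U V hUV hp) hq
          (h₂ p (memV U V hUV hp) q hq hpq).1.choose_spec ≫
        eqToHom (eU U V M N hUV hq).symm
    else
      eqToHom (eV U V M N hUV hp) ≫
        N.map (homOfLE hpq : (⟨p, memV U V hUV hp⟩ : ↥V) ⟶ ⟨q, memV U V hUV hq⟩) ≫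
        eqToHom (eV U V M N hUV hq).symm

lemma phi_id (p : P) : phi U V M N hMN hUV h₁ h₂ (le_refl p) = 𝟙 _ := by
  unfold phi
  by_cases hp : p ∈ U <;> simp [hp]

lemma phi_comp {p q r : P} (hpq : p ≤ q) (hqr : q ≤ r) :
    phi U V M N hMN hUV h₁ h₂ (hpq.trans hqr) =
      phi U V M N hMN hUV h₁ h₂ hpq ≫ phi U V M N hMN hUV h₁ h₂ hqr := by
  unfold phi
  by_cases hp : p ∈ U <;> by_cases hq : q ∈ U <;> by_cases hr : r ∈ U <;>
    simp only [hp, hq, hr, dif_pos, dif_neg, not_false_iff, Category.assoc,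
      eqToHom_trans_assoc, eqToHom_refl, Category.id_comp]
  · -- UUU
    have hcomp : (homOfLE (hpq.trans hqr) : (⟨p, hp⟩ : ↥U) ⟶ ⟨r, hr⟩) =
        (homOfLE hpq : (⟨p, hp⟩ : ↥U) ⟶ ⟨q, hq⟩) ≫ homOfLE hqr := rfl
    rw [hcomp, Functor.map_comp]
    simp
  · -- UUV
    congr 1
    rw [← Category.assoc, bU_preM]
    congr 1
    exact bU_indep U V M N hMN hp (memV U V hUV hr)
      (h₁ p hp r (memV U V hUV hr) (hpq.trans hqr)) _ _
  · -- UVU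
    congr 1
    rw [← Category.assoc, bU_bD]
  · -- UVV
    congr 1
    rw [← Category.assoc, bU_postN]
    congr 1
    exact bU_indep U V M N hMN hp (memV U V hUV hr)
      (h₁ p hp r (memV U V hUV hr) (hpq.trans hqr)) _ _
  · -- VUU
    congr 1
    rw [← Category.assoc, bD_postM]
    congr 1
    exact bD_indep U V M N hMN (memV U V hUV hp) hr
      (h₂ p (memV U V hUV hp) r hr (hpq.trans hqr)) _ _
  · -- VUV
    congr 1
    rw [← Category.assoc, bD_bU]
  · -- VVU
    congr 1
    rw [← Category.assoc, bD_preN]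
    congr 1
    exact bD_indep U V M N hMN (memV U V hUV hp) hr
      (h₂ p (memV U V hUV hp) r hr (hpq.trans hqr)) _ _
  · -- VVV
    have hcomp : (homOfLE (hpq.trans hqr) :
          (⟨p, memV U V hUV hp⟩ : ↥V) ⟶ ⟨r, memV U V hUV hr⟩) =
        (homOfLE hpq : (⟨p, memV U V hUV hp⟩ : ↥V) ⟶ ⟨q, memV U V hUV hq⟩) ≫
          homOfLE hqr := rfl
    rw [hcomp, Functor.map_comp]
    simp

/-- The glued functor. -/
noncomputable def Lglue : P ⥤ C where
  obj := Lobj U V M N hUV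
  map {p q} f := phi U V M N hMN hUV h₁ h₂ (leOfHom f)
  map_id p := phi_id U V M N hMN hUV h₁ h₂ p
  map_comp {p q r} f g := phi_comp U V M N hMN hUV h₁ h₂ (leOfHom f) (leOfHom g)

lemma phi_UU {p q : P} (hpq : p ≤ q) (hp : p ∈ U) (hq : q ∈ U) :
    phi U V M N hMN hUV h₁ h₂ hpq =
      eqToHom (eU U V M N hUV hp) ≫ M.map (homOfLE hpq : (⟨p, hp⟩ : ↥U) ⟶ ⟨q, hq⟩) ≫
        eqToHom (eU U V M N hUV hq).symm := by
  unfold phi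
  rw [dif_pos hp, dif_pos hq]

lemma eVany {p : P} (hp : p ∈ V) : Lobj U V M N hUV p = N.obj ⟨p, hp⟩ := by
  by_cases hpU : p ∈ U
  · rw [eU U V M N hUV hpU]
    exact Eobj U V M N hMN hpU hp
  · exact eV U V M N hUV hpU

lemma phi_VV {p q : P} (hpq : p ≤ q) (hp : p ∈ V) (hq : q ∈ V) :
    phi U V M N hMN hUV h₁ h₂ hpq =
      eqToHom (eVany U V M N hMN hUV hp) ≫
        N.map (homOfLE hpq : (⟨p, hp⟩ : ↥V) ⟶ ⟨q, hq⟩) ≫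
        eqToHom (eVany U V M N hMN hUV hq).symm := by
  unfold phi
  by_cases hpU : p ∈ U <;> by_cases hqU : q ∈ U
  · rw [dif_pos hpU, dif_pos hqU]
    have h := Enat U V M N hMN hpU hp hqU hq hpq
    have hM : M.map (homOfLE hpq : (⟨p, hpU⟩ : ↥U) ⟶ ⟨q, hqU⟩) =
        eqToHom (Eobj U V M N hMN hpU hp) ≫ N.map (homOfLE hpq) ≫
          eqToHom (Eobj U V M N hMN hqU hq).symm := by
      rw [← Category.assoc, ← h]; simp
    rw [hM]
    have e1 : eVany U V M N hMN hUV hp =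
        (eU U V M N hUV hpU).trans (Eobj U V M N hMN hpU hp) := rfl
    have e2 : eVany U V M N hMN hUV hq =
        (eU U V M N hUV hqU).trans (Eobj U V M N hMN hqU hq) := rfl
    simp [e1, e2, eqToHom_trans]
  · rw [dif_pos hpU, dif_neg hqU]
    have hself : p ∈ U ∩ V ∩ Set.Icc p q := ⟨⟨hpU, hp⟩, le_refl p, hpq⟩
    rw [bU_indep U V M N hMN hpU (memV U V hUV hqU)
      (h₁ p hpU q (memV U V hUV hqU) hpq) _ hself]
    unfold bU
    simp
  · rw [dif_neg hpU, dif_pos hqU]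
    have hself : q ∈ U ∩ V ∩ Set.Icc p q := ⟨⟨hqU, hq⟩, hpq, le_refl q⟩
    rw [bD_indep U V M N hMN (memV U V hUV hpU) hqU
      (h₂ p (memV U V hUV hpU) q hqU hpq) _ hself]
    unfold bD
    simp
  · rw [dif_neg hpU, dif_neg hqU]

lemma Lglue_restrU : restrF (Lglue U V M N hMN hUV h₁ h₂) U = M := by
  refine CategoryTheory.Functor.ext (fun (x : ↥U) => eU U V M N hUV x.2) ?_
  intro x y f
  have : (restrF (Lglue U V M N hMN hUV h₁ h₂) U).map f =
      phi U V M N hMN hUV h₁ h₂ (leOfHom f) := rfl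
  rw [this, phi_UU U V M N hMN hUV h₁ h₂ (leOfHom f) x.2 y.2]
  rfl

lemma Lglue_restrV : restrF (Lglue U V M N hMN hUV h₁ h₂) V = N := by
  refine CategoryTheory.Functor.ext (fun (x : ↥V) => eVany U V M N hMN hUV x.2) ?_
  intro x y f
  have : (restrF (Lglue U V M N hMN hUV h₁ h₂) V).map f =
      phi U V M N hMN hUV h₁ h₂ (leOfHom f) := rfl
  rw [this, phi_VV U V M N hMN hUV h₁ h₂ (leOfHom f) x.2 y.2]
  rfl

lemma Lglue_unique (L : P ⥤ C) (hL1 : restrF L U = M) (hL2 : restrF L V = N) :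
    L = Lglue U V M N hMN hUV h₁ h₂ := by
  have LobjU : ∀ {p : P} (hp : p ∈ U), L.obj p = M.obj ⟨p, hp⟩ :=
    fun {p} hp => Functor.congr_obj hL1 ⟨p, hp⟩
  have LobjV : ∀ {p : P} (hp : p ∈ V), L.obj p = N.obj ⟨p, hp⟩ :=
    fun {p} hp => Functor.congr_obj hL2 ⟨p, hp⟩
  have LmapU : ∀ {p q : P} (hp : p ∈ U) (hq : q ∈ U) (h : p ≤ q),
      L.map (homOfLE h) = eqToHom (LobjU hp) ≫
        M.map (homOfLE h : (⟨p, hp⟩ : ↥U) ⟶ ⟨q, hq⟩) ≫ eqToHom (LobjU hq).symm := by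
    intro p q hp hq h
    exact Functor.congr_hom hL1 (homOfLE h : (⟨p, hp⟩ : ↥U) ⟶ ⟨q, hq⟩)
  have LmapV : ∀ {p q : P} (hp : p ∈ V) (hq : q ∈ V) (h : p ≤ q),
      L.map (homOfLE h) = eqToHom (LobjV hp) ≫
        N.map (homOfLE h : (⟨p, hp⟩ : ↥V) ⟶ ⟨q, hq⟩) ≫ eqToHom (LobjV hq).symm := by
    intro p q hp hq h
    exact Functor.congr_hom hL2 (homOfLE h : (⟨p, hp⟩ : ↥V) ⟶ ⟨q, hq⟩)
  have hobj : ∀ p : P, L.obj p = (Lglue U V M N hMN hUV h₁ h₂).obj p := by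
    intro p
    by_cases hp : p ∈ U
    · rw [LobjU hp]
      exact (eU U V M N hUV hp).symm
    · rw [LobjV (memV U V hUV hp)]
      exact (eV U V M N hUV hp).symm
  refine CategoryTheory.Functor.ext hobj ?_
  intro p q f
  have hf : f = homOfLE (leOfHom f) := rfl
  set h : p ≤ q := leOfHom f with hh
  have hglue : (Lglue U V M N hMN hUV h₁ h₂).map f = phi U V M N hMN hUV h₁ h₂ h := rfl
  rw [hglue, hf]
  dsimp only [Lglue]
  by_cases hp : p ∈ U <;> by_cases hq : q ∈ U
  · rw [LmapU hp hq h, phi_UU U V M N hMN hUV h₁ h₂ h hp hq]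
    simp
    erw [eqToHom_trans_assoc, eqToHom_trans]
  · -- p ∈ U, q ∉ U : go through the chosen midpoint
    have hqV : q ∈ V := memV U V hUV hq
    set w := (h₁ p hp q hqV h).1.choose with hw
    have hwmem : w ∈ U ∩ V ∩ Set.Icc p q := (h₁ p hp q hqV h).1.choose_spec
    have hsplit : (homOfLE h : p ⟶ q) =
        (homOfLE hwmem.2.1 : p ⟶ w) ≫ homOfLE hwmem.2.2 := rfl
    rw [hsplit, L.map_comp, LmapU hp hwmem.1.1 hwmem.2.1,
      LmapV hwmem.1.2 hqV hwmem.2.2]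
    unfold phi
    rw [dif_pos hp, dif_neg hq]
    unfold bU
    simp
    erw [eqToHom_trans_assoc, eqToHom_trans]
  · -- p ∉ U, q ∈ U
    have hpV : p ∈ V := memV U V hUV hp
    set w := (h₂ p hpV q hq h).1.choose with hw
    have hwmem : w ∈ U ∩ V ∩ Set.Icc p q := (h₂ p hpV q hq h).1.choose_spec
    have hsplit : (homOfLE h : p ⟶ q) =
        (homOfLE hwmem.2.1 : p ⟶ w) ≫ homOfLE hwmem.2.2 := rfl
    rw [hsplit, L.map_comp, LmapV hpV hwmem.1.2 hwmem.2.1,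
      LmapU hwmem.1.1 hq hwmem.2.2]
    unfold phi
    rw [dif_neg hp, dif_pos hq]
    unfold bD
    simp
    erw [eqToHom_trans_assoc, eqToHom_trans]
  · have hpV : p ∈ V := memV U V hUV hp
    have hqV : q ∈ V := memV U V hUV hq
    rw [LmapV hpV hqV h, phi_VV U V M N hMN hUV h₁ h₂ h hpV hqV]
    simp
    erw [eqToHom_trans_assoc, eqToHom_trans]

end GlueAux

/-- Gluing functors along two subposets covering a poset, with connected coamalgamation
intervals. -/
theorem glue_functors (C : Type*) [CategoryTheory.Category C] (P : Type) [PartialOrder P]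
    (U V : Set P) (hUV : U ∪ V = Set.univ)
    (h₁ : ∀ u ∈ U, ∀ v ∈ V, u ≤ v → ConnectedSubposet (U ∩ V ∩ Set.Icc u v))
    (h₂ : ∀ v ∈ V, ∀ u ∈ U, v ≤ u → ConnectedSubposet (U ∩ V ∩ Set.Icc v u))
    (M : ↥U ⥤ C) (N : ↥V ⥤ C)
    (hMN : restrSubF Set.inter_subset_left M = restrSubF Set.inter_subset_right N) :
    ∃! L : P ⥤ C, restrF L U = M ∧ restrF L V = N := by
  refine ⟨Lglue U V M N hMN hUV h₁ h₂,
    ⟨Lglue_restrU U V M N hMN hUV h₁ h₂, Lglue_restrV U V M N hMN hUV h₁ h₂⟩, ?_⟩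
  intro L hL
  exact Lglue_unique U V M N hMN hUV h₁ h₂ L hL.1 hL.2
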